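/- arXiv:2202.05693 — 2 statements merged into one kernel-verified Lean document; each statement's English description precedes it below -/
import Mathlib

section
/- Schützenberger's truncation lemma: let S be a recognizable series over a field F with linear representation (c, M, b) of size s, i.e., S = ∑_{k≥0} c · M^k · b where M is an s×s matrix of homogeneous linear forms in noncommuting variables, c ∈ F^{1×s}, b ∈ F^{s×1}. Then S is the zero series if and only if c · M^k · b = 0 for all k ≤ s − 1. -/
open Matrix

private def schutzV {F : Type} [Field F] {n s : ℕ}
    (A : Fin n → Matrix (Fin s) (Fin s) F) (c : Fin s → F) (k : ℕ) :
    Submodule F (Fin s → F) :=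
  Submodule.span F {v | ∃ l : List (Fin n), l.length ≤ k ∧ v = Matrix.vecMul c (l.map A).prod}

private theorem schutzV_mono {F : Type} [Field F] {n s : ℕ}
    (A : Fin n → Matrix (Fin s) (Fin s) F) (c : Fin s → F) :
    Monotone (schutzV A c) := by
  intro j k hjk
  apply Submodule.span_mono
  rintro v ⟨l, hl, rfl⟩
  exact ⟨l, hl.trans hjk, rfl⟩

private theorem schutzV_gen {F : Type} [Field F] {n s : ℕ}
    (A : Fin n → Matrix (Fin s) (Fin s) F) (c : Fin s → F) (l : List (Fin n)) (k : ℕ)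
    (hl : l.length ≤ k) : Matrix.vecMul c (l.map A).prod ∈ schutzV A c k :=
  Submodule.subset_span ⟨l, hl, rfl⟩

private theorem schutzV_step {F : Type} [Field F] {n s : ℕ}
    (A : Fin n → Matrix (Fin s) (Fin s) F) (c : Fin s → F) (k : ℕ)
    (hk : schutzV A c k = schutzV A c (k + 1)) :
    schutzV A c (k + 1) = schutzV A c (k + 2) := by
  refine le_antisymm (schutzV_mono A c (by omega)) ?_
  apply Submodule.span_le.mpr
  rintro v ⟨l, hl, rfl⟩
  rcases Nat.lt_or_ge l.length (k + 2) with h1 | h1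
  · exact schutzV_gen A c l (k + 1) (by omega)
  rcases l.eq_nil_or_concat with rfl | ⟨l', i, rfl⟩
  · simp at h1
  have hlen : l'.length = k + 1 := by
    simp only [List.concat_eq_append, List.length_append, List.length_cons,
      List.length_nil] at hl h1
    omega
  have hmem : Matrix.vecMul c ((l'.map A).prod) ∈ schutzV A c k := by
    rw [hk]; exact schutzV_gen A c l' (k + 1) (by omega)
  have himg : (schutzV A c k).map ((A i).vecMulLinear) ≤ schutzV A c (k + 1) := by
    rw [schutzV, Submodule.map_span]
    apply Submodule.span_le.mpr
    rintro v ⟨u, ⟨l'', hl'', rfl⟩, rfl⟩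
    have : (A i).vecMulLinear (Matrix.vecMul c (l''.map A).prod)
        = Matrix.vecMul c ((l''.concat i).map A).prod := by
      simp [Matrix.vecMulLinear_apply, Matrix.vecMul_vecMul]
    rw [this]
    exact schutzV_gen A c (l''.concat i) (k + 1) (by simp; omega)
  have : Matrix.vecMul c (((l'.concat i)).map A).prod
      = (A i).vecMulLinear (Matrix.vecMul c (l'.map A).prod) := by
    simp [Matrix.vecMulLinear_apply, Matrix.vecMul_vecMul]
  rw [this]
  exact himg (Submodule.mem_map_of_mem hmem)

private theorem schutzV_stab {F : Type} [Field F] {n s : ℕ}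
    (A : Fin n → Matrix (Fin s) (Fin s) F) (c : Fin s → F) (k : ℕ)
    (hk : schutzV A c k = schutzV A c (k + 1)) :
    ∀ j, k ≤ j → schutzV A c j = schutzV A c k := by
  have key : ∀ j, schutzV A c (k + j) = schutzV A c k ∧
      schutzV A c (k + j) = schutzV A c (k + j + 1) := by
    intro j
    induction j with
    | zero => exact ⟨rfl, hk⟩
    | succ m ih =>
      have hstep := schutzV_step A c (k + m) ih.2
      have e1 : schutzV A c (k + (m + 1)) = schutzV A c (k + m) := by
        rw [show k + (m + 1) = k + m + 1 from rfl]
        exact ih.2.symm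
      exact ⟨e1.trans ih.1, hstep⟩
  intro j hj
  obtain ⟨m, rfl⟩ := Nat.exists_eq_add_of_le hj
  exact (key m).1

private theorem schutz_exists_stab {F : Type} [Field F] {n s : ℕ} (hs : 0 < s)
    (A : Fin n → Matrix (Fin s) (Fin s) F) (c : Fin s → F) (hc : c ≠ 0) :
    ∃ k < s, schutzV A c k = schutzV A c (k + 1) := by
  by_contra hcon
  push_neg at hcon
  have hlt : ∀ k < s, schutzV A c k < schutzV A c (k + 1) :=
    fun k hk => lt_of_le_of_ne (schutzV_mono A c (by omega)) (hcon k hk)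
  have hrank : ∀ k ≤ s, k + 1 ≤ Module.finrank F (schutzV A c k) := by
    intro k hk
    induction k with
    | zero =>
      have hcmem : c ∈ schutzV A c 0 := by
        have := schutzV_gen A c [] 0 (by simp)
        simpa using this
      have : schutzV A c 0 ≠ ⊥ := by
        intro hbot
        rw [hbot] at hcmem
        exact hc (by simpa using hcmem)
      have hne : Module.finrank F (schutzV A c 0) ≠ 0 := fun h0 => this (Submodule.finrank_eq_zero.mp h0)
      omega
    | succ m ih =>
      have h1 : m + 1 ≤ Module.finrank F (schutzV A c m) := ih (by omega)
      have h2 : Module.finrank F (schutzV A c m) < Module.finrank F (schutzV A c (m + 1)) :=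
        Submodule.finrank_lt_finrank_of_lt (hlt m (by omega))
      omega
  have h1 : s + 1 ≤ Module.finrank F (schutzV A c s) := hrank s le_rfl
  have h2 : Module.finrank F (schutzV A c s) ≤ Module.finrank F (Fin s → F) :=
    Submodule.finrank_le _
  simp [Module.finrank_pi] at h2
  omega

private theorem schutz_core {F : Type} [Field F] {n s : ℕ}
    (A : Fin n → Matrix (Fin s) (Fin s) F) (c b : Fin s → F)
    (h : ∀ l : List (Fin n), l.length ≤ s - 1 →
      (Matrix.vecMul c (l.map A).prod) ⬝ᵥ b = 0) :
    ∀ l : List (Fin n), (Matrix.vecMul c (l.map A).prod) ⬝ᵥ b = 0 := by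
  rcases Nat.eq_zero_or_pos s with hs | hs
  · subst hs; intro l; simp [dotProduct]
  by_cases hc : c = 0
  · intro l; simp [hc]
  obtain ⟨k0, hk0s, hk0⟩ := schutz_exists_stab hs A c hc
  have hVle : ∀ j, schutzV A c j ≤ schutzV A c (s - 1) := by
    intro j
    rcases le_or_gt j (s - 1) with h1 | h1
    · exact schutzV_mono A c h1
    · rw [schutzV_stab A c k0 hk0 j (by omega)]
      exact schutzV_mono A c (by omega)
  have hb : ∀ v ∈ schutzV A c (s - 1), v ⬝ᵥ b = 0 := by
    intro v hv
    induction hv using Submodule.span_induction with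
    | mem v hv => obtain ⟨l, hl, rfl⟩ := hv; exact h l hl
    | zero => simp
    | add u w _ _ hu hw => simp [add_dotProduct, hu, hw]
    | smul a u _ hu => simp [smul_dotProduct, hu]
  intro l
  exact hb _ (hVle l.length (schutzV_gen A c l l.length le_rfl))

private theorem schutz_equiv_mono {F : Type} [Field F] {n : ℕ} (l : List (Fin n)) :
    FreeAlgebra.equivMonoidAlgebraFreeMonoid ((l.map (FreeAlgebra.ι F)).prod)
      = MonoidAlgebra.single (FreeMonoid.ofList l) (1 : F) := by
  induction l with
  | nil =>
    simp only [List.map_nil, List.prod_nil, _root_.map_one]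
    rw [MonoidAlgebra.one_def]
    rfl
  | cons x t ih =>
    simp only [List.map_cons, List.prod_cons, _root_.map_mul, ih]
    have hx : FreeAlgebra.equivMonoidAlgebraFreeMonoid (FreeAlgebra.ι F x)
        = MonoidAlgebra.single (FreeMonoid.of x) (1 : F) := by
      simp [FreeAlgebra.equivMonoidAlgebraFreeMonoid, FreeAlgebra.lift_ι_apply]
    rw [hx]
    have hsms := MonoidAlgebra.single_mul_single (R := F) (M := FreeMonoid (Fin n))
      (FreeMonoid.of x) (FreeMonoid.ofList t) (1 : F) (1 : F)
    simp only [one_mul] at hsms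
    have hof : FreeMonoid.of x * FreeMonoid.ofList t = FreeMonoid.ofList (x :: t) := rfl
    rw [hof] at hsms
    exact hsms

private theorem schutz_linind {F : Type} [Field F] {n k : ℕ} :
    LinearIndependent F (fun w : Fin k → Fin n =>
      (List.ofFn fun t => FreeAlgebra.ι F (w t)).prod) := by
  classical
  have h1 : LinearIndependent F
      (fun m : FreeMonoid (Fin n) => MonoidAlgebra.single m (1 : F)) := by
    have := (MonoidAlgebra.basis (FreeMonoid (Fin n)) F).linearIndependent
    exact this
  have hinj : Function.Injective
      (fun w : Fin k → Fin n => FreeMonoid.ofList (List.ofFn w)) := by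
    intro u v huv
    exact List.ofFn_injective (FreeMonoid.ofList.injective huv)
  have h2 := h1.comp _ hinj
  have h3 := h2.map' (FreeAlgebra.equivMonoidAlgebraFreeMonoid
    (R := F) (X := Fin n)).symm.toLinearEquiv.toLinearMap
    (LinearEquiv.ker _)
  have heq : (fun w : Fin k → Fin n => (List.ofFn fun t => FreeAlgebra.ι F (w t)).prod)
      = (FreeAlgebra.equivMonoidAlgebraFreeMonoid (R := F) (X := Fin n)).symm.toLinearEquiv.toLinearMap ∘
        ((fun m : FreeMonoid (Fin n) => MonoidAlgebra.single m (1 : F)) ∘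
          (fun w : Fin k → Fin n => FreeMonoid.ofList (List.ofFn w))) := by
    funext w
    simp only [Function.comp_apply, LinearEquiv.coe_coe, AlgEquiv.toLinearEquiv_apply]
    have hm : (List.ofFn fun t => FreeAlgebra.ι F (w t)) = (List.ofFn w).map (FreeAlgebra.ι F) := by
      rw [List.map_ofFn]
      rfl
    rw [hm, ← schutz_equiv_mono (List.ofFn w), AlgEquiv.symm_apply_apply]
  rw [heq]
  exact h3

private theorem schutz_expand {F : Type} [Field F] {n s : ℕ}
    (M : Matrix (Fin s) (Fin s) (FreeAlgebra F (Fin n)))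
    (A : Fin n → Matrix (Fin s) (Fin s) F)
    (hA : ∀ i j, M i j = ∑ t, A t i j • FreeAlgebra.ι F t) (k : ℕ) :
    ∀ i j, (M ^ k) i j = ∑ w : Fin k → Fin n,
      ((List.ofFn fun t => A (w t)).prod i j) • (List.ofFn fun t => FreeAlgebra.ι F (w t)).prod := by
  induction k with
  | zero =>
    intro i j
    rw [pow_zero]
    rw [Fintype.sum_unique]
    simp [Matrix.one_apply]
  | succ m ih =>
    intro i j
    rw [pow_succ']
    rw [Matrix.mul_apply]
    set e : (Fin n × (Fin m → Fin n)) ≃ (Fin (m + 1) → Fin n) :=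
      Fin.consEquiv (fun _ => Fin n) with he
    rw [← Equiv.sum_comp e (fun w : Fin (m+1) → Fin n =>
      ((List.ofFn fun t => A (w t)).prod i j) • (List.ofFn fun t => FreeAlgebra.ι F (w t)).prod)]
    rw [Fintype.sum_prod_type]
    have hcons : ∀ (t0 : Fin n) (w : Fin m → Fin n),
        (fun p : Fin n × (Fin m → Fin n) =>
          ((List.ofFn fun t => A (e p t)).prod i j) • (List.ofFn fun t => FreeAlgebra.ι F (e p t)).prod) (t0, w)
        = ((A t0 * (List.ofFn fun t => A (w t)).prod) i j) •
            (FreeAlgebra.ι F t0 * (List.ofFn fun t => FreeAlgebra.ι F (w t)).prod) := by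
      intro t0 w
      have h1 : (List.ofFn fun t => A (e (t0, w) t)) = A t0 :: List.ofFn fun t => A (w t) := by
        rw [List.ofFn_succ]
        simp [he, Fin.cons_zero, Fin.cons_succ]
      have h2 : (List.ofFn fun t => FreeAlgebra.ι F (e (t0, w) t))
          = FreeAlgebra.ι F t0 :: List.ofFn fun t => FreeAlgebra.ι F (w t) := by
        rw [List.ofFn_succ]
        simp [he, Fin.cons_zero, Fin.cons_succ]
      simp only [h1, h2, List.prod_cons]
    calc ∑ l, M i l * (M ^ m) l j
        = ∑ l, (∑ t0, A t0 i l • FreeAlgebra.ι F t0) *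
            (∑ w : Fin m → Fin n, ((List.ofFn fun t => A (w t)).prod l j) •
              (List.ofFn fun t => FreeAlgebra.ι F (w t)).prod) := by
          refine Finset.sum_congr rfl fun l _ => ?_
          rw [hA i l, ih l j]
      _ = ∑ l, ∑ t0, ∑ w : Fin m → Fin n,
            (A t0 i l * (List.ofFn fun t => A (w t)).prod l j) •
              (FreeAlgebra.ι F t0 * (List.ofFn fun t => FreeAlgebra.ι F (w t)).prod) := by
          refine Finset.sum_congr rfl fun l _ => ?_
          rw [Finset.sum_mul]
          refine Finset.sum_congr rfl fun t0 _ => ?_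
          rw [Finset.mul_sum]
          refine Finset.sum_congr rfl fun w _ => ?_
          rw [smul_mul_smul_comm]
      _ = ∑ t0, ∑ w : Fin m → Fin n,
            ((A t0 * (List.ofFn fun t => A (w t)).prod) i j) •
              (FreeAlgebra.ι F t0 * (List.ofFn fun t => FreeAlgebra.ι F (w t)).prod) := by
          rw [Finset.sum_comm]
          refine Finset.sum_congr rfl fun t0 _ => ?_
          rw [Finset.sum_comm]
          refine Finset.sum_congr rfl fun w _ => ?_
          rw [Matrix.mul_apply, Finset.sum_smul]
      _ = ∑ t0, ∑ w : Fin m → Fin n,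
            (fun p : Fin n × (Fin m → Fin n) =>
              ((List.ofFn fun t => A (e p t)).prod i j) •
                (List.ofFn fun t => FreeAlgebra.ι F (e p t)).prod) (t0, w) := by
          refine Finset.sum_congr rfl fun t0 _ => Finset.sum_congr rfl fun w _ => ?_
          rw [hcons]

private theorem schutz_dot {F : Type} [Field F] {s : ℕ} (c b : Fin s → F)
    (P : Matrix (Fin s) (Fin s) F) :
    ∑ i, ∑ j, (c i * b j) * P i j = Matrix.vecMul c P ⬝ᵥ b := by
  simp only [Matrix.vecMul, dotProduct, Finset.sum_mul]
  rw [Finset.sum_comm]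
  exact Finset.sum_congr rfl fun i _ => Finset.sum_congr rfl fun j _ => by ring

/-- Schützenberger's truncation lemma: a recognizable series
`S = ∑_{k ≥ 0} c · Mᵏ · b` with linear representation of size `s`, where the entries of `M`
are homogeneous linear forms in noncommuting variables `x₁,…,xₙ`, is the zero series
(i.e. every homogeneous component `c · Mᵏ · b` vanishes) if and only if
`c · Mᵏ · b = 0` for all `k ≤ s - 1`. -/
theorem schutzenberger_truncation {F : Type} [Field F] (n s : ℕ) (hs : 0 < s)
    (M : Matrix (Fin s) (Fin s) (FreeAlgebra F (Fin n)))
    (hM : ∀ i j, M i j ∈ Submodule.span F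
      (Set.range (FreeAlgebra.ι F : Fin n → FreeAlgebra F (Fin n))))
    (c b : Fin s → F) :
    (∀ k : ℕ, ∑ i, ∑ j, (c i * b j) • (M ^ k) i j = 0) ↔
      (∀ k ≤ s - 1, ∑ i, ∑ j, (c i * b j) • (M ^ k) i j = 0) := by
  constructor
  · intro h k _
    exact h k
  intro h
  have hex : ∀ i j, ∃ a : Fin n → F, ∑ t, a t • FreeAlgebra.ι F t = M i j :=
    fun i j => (Submodule.mem_span_range_iff_exists_fun F).mp (hM i j)
  choose a ha using hex
  set A : Fin n → Matrix (Fin s) (Fin s) F := fun t => Matrix.of fun i j => a i j t with hAdef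
  have hA : ∀ i j, M i j = ∑ t, A t i j • FreeAlgebra.ι F t := fun i j => (ha i j).symm
  have hmap : ∀ {k : ℕ} (w : Fin k → Fin n),
      (List.ofFn fun t => A (w t)) = (List.ofFn w).map A := by
    intro k w
    rw [List.map_ofFn]
    rfl
  have hSw : ∀ k : ℕ, (∑ i, ∑ j, (c i * b j) • (M ^ k) i j)
      = ∑ w : Fin k → Fin n, (Matrix.vecMul c ((List.ofFn w).map A).prod ⬝ᵥ b) •
          (List.ofFn fun t => FreeAlgebra.ι F (w t)).prod := by
    intro k
    calc ∑ i, ∑ j, (c i * b j) • (M ^ k) i j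
        = ∑ i, ∑ j, ∑ w : Fin k → Fin n,
            ((c i * b j) * ((List.ofFn w).map A).prod i j) •
              (List.ofFn fun t => FreeAlgebra.ι F (w t)).prod := by
          refine Finset.sum_congr rfl fun i _ => Finset.sum_congr rfl fun j _ => ?_
          rw [schutz_expand M A hA k i j, Finset.smul_sum]
          refine Finset.sum_congr rfl fun w _ => ?_
          rw [smul_smul, hmap]
      _ = ∑ w : Fin k → Fin n, ∑ i, ∑ j,
            ((c i * b j) * ((List.ofFn w).map A).prod i j) •
              (List.ofFn fun t => FreeAlgebra.ι F (w t)).prod := by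
          rw [show (∑ i, ∑ j, ∑ w : Fin k → Fin n,
              ((c i * b j) * ((List.ofFn w).map A).prod i j) •
                (List.ofFn fun t => FreeAlgebra.ι F (w t)).prod)
              = ∑ i, ∑ w : Fin k → Fin n, ∑ j,
              ((c i * b j) * ((List.ofFn w).map A).prod i j) •
                (List.ofFn fun t => FreeAlgebra.ι F (w t)).prod from
            Finset.sum_congr rfl fun i _ => Finset.sum_comm]
          exact Finset.sum_comm
      _ = ∑ w : Fin k → Fin n,
            (∑ i, ∑ j, (c i * b j) * ((List.ofFn w).map A).prod i j) •
              (List.ofFn fun t => FreeAlgebra.ι F (w t)).prod := by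
          refine Finset.sum_congr rfl fun w _ => ?_
          rw [Finset.sum_smul]
          refine Finset.sum_congr rfl fun i _ => ?_
          rw [Finset.sum_smul]
      _ = ∑ w : Fin k → Fin n, (Matrix.vecMul c ((List.ofFn w).map A).prod ⬝ᵥ b) •
            (List.ofFn fun t => FreeAlgebra.ι F (w t)).prod := by
          refine Finset.sum_congr rfl fun w _ => ?_
          rw [schutz_dot]
  have hwords : ∀ l : List (Fin n), Matrix.vecMul c (l.map A).prod ⬝ᵥ b = 0 := by
    apply schutz_core
    intro l hl
    have h0 := h l.length (by omega)
    rw [hSw l.length] at h0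
    have hz := Fintype.linearIndependent_iff.mp schutz_linind
      (fun w : Fin l.length → Fin n => Matrix.vecMul c ((List.ofFn w).map A).prod ⬝ᵥ b) h0 l.get
    simpa [List.ofFn_get] using hz
  intro k
  rw [hSw k]
  refine Finset.sum_eq_zero fun w _ => ?_
  rw [hwords (List.ofFn w), zero_smul]
end

section
/- Let w = a₀ x_{k₁} a₁ x_{k₂} ⋯ a_{d−1} x_{k_d} a_d be a generalized word of degree d with coefficients a_j ∈ M_ℓ(K). Substitute each variable x_k by the dℓ×dℓ block matrix Z̃_k which has blocks Z̃_{k,1},…,Z̃_{k,d} of size ℓ on the cyclic superdiagonal (position (l, l+1) for l < d and (d,1)), and embed each coefficient a via a ↦ I_d ⊗ a. Then the resulting product is block-diagonal with d diagonal blocks, the i-th block being a₀ Z̃_{k₁,π_i(1)} a₁ ⋯ a_{d−1} Z̃_{k_d,π_i(d)} a_d, where π_i is the cyclic permutation of [d] with π_i(1) = i. -/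
open Matrix

/-- The `dℓ×dℓ` matrix with `ℓ×ℓ` blocks `Z l` on the cyclic superdiagonal
(block positions `(l, l+1)` for `l < d` and `(d, 1)`), zeros elsewhere.
(The block index is the second component, matching `Matrix.blockDiagonal`.) -/
def cyclicBlocks {R : Type} [Semiring R] {ℓ d : ℕ} [NeZero d] (Z : Fin d → Matrix (Fin ℓ) (Fin ℓ) R) :
    Matrix (Fin ℓ × Fin d) (Fin ℓ × Fin d) R :=
  Matrix.of fun p q => if q.2 = p.2 + 1 then Z p.2 p.1 q.1 else 0

/-- The `dℓ×dℓ` matrix with `ℓ×ℓ` blocks `M l` at block positions `(l, l + s)` (cyclically). -/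
def shiftBlocks {R : Type} [Semiring R] {ℓ d : ℕ} (s : Fin d)
    (M : Fin d → Matrix (Fin ℓ) (Fin ℓ) R) :
    Matrix (Fin ℓ × Fin d) (Fin ℓ × Fin d) R :=
  Matrix.of fun p q => if q.2 = p.2 + s then M p.2 p.1 q.1 else 0

theorem shiftBlocks_zero {R : Type} [Semiring R] {ℓ d : ℕ} [NeZero d]
    (M : Fin d → Matrix (Fin ℓ) (Fin ℓ) R) :
    shiftBlocks 0 M = Matrix.blockDiagonal M := by
  ext ⟨x, i⟩ ⟨y, j⟩
  simp [shiftBlocks, Matrix.blockDiagonal_apply, eq_comm]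

theorem shiftBlocks_mul {R : Type} [Semiring R] {ℓ d : ℕ} (s t : Fin d)
    (M N : Fin d → Matrix (Fin ℓ) (Fin ℓ) R) :
    shiftBlocks s M * shiftBlocks t N = shiftBlocks (s + t) (fun i => M i * N (i + s)) := by
  ext ⟨x, i⟩ ⟨y, j⟩
  simp only [shiftBlocks, Matrix.mul_apply, Matrix.of_apply, Fintype.sum_prod_type,
    ite_mul, zero_mul]
  rw [Finset.sum_comm, Finset.sum_eq_single (i + s)]
  · simp only [if_pos rfl]
    by_cases h : j = i + (s + t)
    · subst h
      simp [Matrix.mul_apply, add_assoc]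
    · have h' : ¬ j = i + s + t := by rw [add_assoc]; exact h
      simp [h, h']
  · intro b _ hb
    simp [hb]
  · simp

open Fin.NatCast Fin.CommRing in
theorem prod_shiftBlocks {R : Type} [Semiring R] {ℓ d : ℕ} [NeZero d] (m : ℕ)
    (M : Fin m → Fin d → Matrix (Fin ℓ) (Fin ℓ) R) :
    (List.ofFn fun j => shiftBlocks 1 (M j)).prod =
      shiftBlocks ((m : ℕ) : Fin d)
        (fun i => (List.ofFn fun j : Fin m => M j (i + ((j : ℕ) : Fin d))).prod) := by
  induction m with
  | zero =>
      simp only [List.ofFn_zero, List.prod_nil, Nat.cast_zero]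
      rw [shiftBlocks_zero]
      exact Matrix.blockDiagonal_one.symm
  | succ m ih =>
      rw [List.ofFn_succ, List.prod_cons, ih (fun j => M j.succ), shiftBlocks_mul]
      have hc : (((m + 1 : ℕ)) : Fin d) = 1 + ((m : ℕ) : Fin d) := by push_cast; ring
      have hf : (fun i : Fin d =>
            (List.ofFn fun j : Fin (m + 1) => M j (i + ((j : ℕ) : Fin d))).prod) =
          fun i => M 0 i *
            (List.ofFn fun j : Fin m => M j.succ (i + 1 + ((j : ℕ) : Fin d))).prod := by
        funext i
        rw [List.ofFn_succ, List.prod_cons]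
        congr 1
        · simp
        · refine congrArg List.prod (congrArg List.ofFn ?_)
          funext j
          push_cast [Fin.val_succ]
          ring_nf
      rw [hc, hf]

/-- Evaluating a generalized word `a₀ x_{k₁} a₁ ⋯ x_{k_d} a_d` at the cyclic-superdiagonal
block matrices `Z̃_k`, embedding coefficients via `a ↦ I_d ⊗ a` (block-diagonally), gives a
block-diagonal matrix whose `i`-th diagonal block is
`a₀ Z̃_{k₁, π_i(1)} a₁ ⋯ Z̃_{k_d, π_i(d)} a_d` with `π_i` the cyclic permutation of `[d]`
with `π_i(1) = i` (0-indexed: `π_i(j) = i + j` in `Fin d`). -/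
theorem generalizedWord_cyclicBlocks_eq_blockDiagonal {K : Type} [CommRing K] {ℓ d n : ℕ} [NeZero d]
    (a : Fin (d + 1) → Matrix (Fin ℓ) (Fin ℓ) K) (k : Fin d → Fin n)
    (Z : Fin n → Fin d → Matrix (Fin ℓ) (Fin ℓ) K) :
    Matrix.blockDiagonal (fun _ : Fin d => a 0) *
        (List.ofFn fun j : Fin d =>
          cyclicBlocks (Z (k j)) * Matrix.blockDiagonal (fun _ : Fin d => a j.succ)).prod =
      Matrix.blockDiagonal fun i : Fin d =>
        a 0 * (List.ofFn fun j : Fin d => Z (k j) (i + j) * a j.succ).prod := by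
  have hcyc : ∀ (W : Fin d → Matrix (Fin ℓ) (Fin ℓ) K), cyclicBlocks W = shiftBlocks 1 W :=
    fun W => rfl
  have hfac : (fun j : Fin d =>
        cyclicBlocks (Z (k j)) * Matrix.blockDiagonal (fun _ : Fin d => a j.succ)) =
      fun j : Fin d => shiftBlocks 1 (fun i => Z (k j) i * a j.succ) := by
    funext j
    rw [hcyc, ← shiftBlocks_zero, shiftBlocks_mul]
    simp
  rw [hfac, prod_shiftBlocks d (fun j i => Z (k j) i * a j.succ), ← shiftBlocks_zero,
    Fin.natCast_self, shiftBlocks_mul]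
  rw [show ((0 : Fin d) + 0 = 0) from add_zero 0, shiftBlocks_zero]
  funext i
  simp [Fin.cast_val_eq_self]
end
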